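/- arXiv:1907.03995 — 2 statements merged into one kernel-verified Lean document; each statement's English description precedes it below -/
import Mathlib

section
/- Let a and b be bounded operators on a Hilbert space H. Then a and b are disjoint (a*b = 0 and a b* = 0) if and only if |a| and |b| are disjoint and |a*| and |b*| are disjoint, where |x| denotes the absolute value (positive square root of x*x). -/
open ContinuousLinearMap in
/-- The absolute value `|x| = (x* x)^{1/2}` of a bounded operator. -/
noncomputable def opAbs {H : Type*} [NormedAddCommGroup H] [InnerProductSpace ℂ H]
    [CompleteSpace H] (x : H →L[ℂ] H) : H →L[ℂ] H :=
  CFC.sqrt (adjoint x * x)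

section aux

variable {H : Type*} [NormedAddCommGroup H] [InnerProductSpace ℂ H] [CompleteSpace H]

open ContinuousLinearMap
open scoped InnerProductSpace

set_option synthInstance.maxHeartbeats 400000 in
lemma opAbs_nonneg (a : H →L[ℂ] H) : 0 ≤ opAbs a := CFC.sqrt_nonneg _

lemma opAbs_selfAdjoint (a : H →L[ℂ] H) : IsSelfAdjoint (opAbs a) :=
  IsSelfAdjoint.of_nonneg (opAbs_nonneg a)

lemma opAbs_mul_self (a : H →L[ℂ] H) : opAbs a * opAbs a = adjoint a * a := by
  have h : (0 : H →L[ℂ] H) ≤ adjoint a * a := by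
    rw [← star_eq_adjoint]; exact star_mul_self_nonneg a
  have := CFC.sq_sqrt (adjoint a * a) h
  rwa [sq] at this

lemma norm_opAbs_apply (a : H →L[ℂ] H) (x : H) : ‖opAbs a x‖ = ‖a x‖ := by
  have hsa : adjoint (opAbs a) = opAbs a := by
    rw [← star_eq_adjoint]; exact (opAbs_selfAdjoint a).star_eq
  have h : (⟪opAbs a x, opAbs a x⟫_ℂ) = ⟪a x, a x⟫_ℂ := by
    rw [← adjoint_inner_left (opAbs a), hsa, ← adjoint_inner_left a]
    simp only [← mul_apply_eq_comp, opAbs_mul_self]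
  rw [@norm_eq_sqrt_re_inner ℂ, @norm_eq_sqrt_re_inner ℂ, h]

lemma mul_opAbs_eq_zero_iff (a c : H →L[ℂ] H) : a * c = 0 ↔ opAbs a * c = 0 := by
  constructor <;> intro h <;> ext x <;>
    have := congrFun (congrArg DFunLike.coe h) x <;>
    simp only [mul_apply_eq_comp, zero_apply] at this ⊢
  · rw [← norm_eq_zero, norm_opAbs_apply, norm_eq_zero, this]
  · rw [← norm_eq_zero, ← norm_opAbs_apply, norm_eq_zero, this]

/-- `a b* = 0 ↔ |a| |b| = 0`. -/
lemma mul_adjoint_eq_zero_iff (a b : H →L[ℂ] H) :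
    a * adjoint b = 0 ↔ opAbs a * opAbs b = 0 := by
  have hb : star (adjoint b) = b := by rw [star_eq_adjoint, adjoint_adjoint]
  rw [mul_opAbs_eq_zero_iff]
  constructor
  · intro h
    have h1 : b * opAbs a = 0 := by
      have := congrArg star h
      rwa [star_mul, hb, (opAbs_selfAdjoint a).star_eq, star_zero] at this
    rw [mul_opAbs_eq_zero_iff] at h1
    have := congrArg star h1
    rwa [star_mul, (opAbs_selfAdjoint a).star_eq, (opAbs_selfAdjoint b).star_eq,
      star_zero] at this
  · intro h
    have h1 : opAbs b * opAbs a = 0 := by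
      have := congrArg star h
      rwa [star_mul, (opAbs_selfAdjoint a).star_eq, (opAbs_selfAdjoint b).star_eq,
        star_zero] at this
    rw [← mul_opAbs_eq_zero_iff] at h1
    have := congrArg star h1
    rwa [star_mul, (opAbs_selfAdjoint a).star_eq, star_eq_adjoint b, star_zero] at this

end aux

theorem disjoint_iff_abs_disjoint {H : Type*} [NormedAddCommGroup H] [InnerProductSpace ℂ H]
    [CompleteSpace H] (a b : H →L[ℂ] H) :
    (ContinuousLinearMap.adjoint a * b = 0 ∧ a * ContinuousLinearMap.adjoint b = 0) ↔
      (opAbs a * opAbs b = 0 ∧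
        opAbs (ContinuousLinearMap.adjoint a) * opAbs (ContinuousLinearMap.adjoint b) = 0) := by
  have h1 := mul_adjoint_eq_zero_iff a b
  have h2 := mul_adjoint_eq_zero_iff (ContinuousLinearMap.adjoint a) (ContinuousLinearMap.adjoint b)
  rw [ContinuousLinearMap.adjoint_adjoint] at h2
  exact ⟨fun ⟨x, y⟩ => ⟨h1.mp y, h2.mp x⟩, fun ⟨x, y⟩ => ⟨h2.mpr y, h1.mpr x⟩⟩
end

section
/- Let a, b be n×n complex matrices with a*b = 0 and a b* = 0, with polar decompositions a = u|a|, b = v|b|. Setting a₁ = u|a|^{1/2}, a₂ = |a|^{1/2}, b₁ = v|b|^{1/2}, b₂ = |b|^{1/2}, one has a = a₁a₂, b = b₁b₂, and the estimate ‖a₁a₁* + b₁b₁*‖₂ · ‖a₂*a₂ + b₂*b₂‖₂ ≤ ‖a‖₂² + ‖b‖₂², where ‖·‖₂ is the Frobenius norm. -/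
open Matrix ComplexOrder

/-- The Frobenius (Hilbert–Schmidt) norm `‖x‖₂ = sqrt(trace(x* x))` of a complex matrix. -/
noncomputable def frob {n : ℕ} (x : Matrix (Fin n) (Fin n) ℂ) : ℝ :=
  Real.sqrt ((xᴴ * x).trace.re)

/-- The square root of a Hermitian (positive semidefinite) matrix, spelled out as the
removed `Matrix.PosSemidef.sqrt` was defined in the older Mathlib. -/
noncomputable def oldPsdSqrt {n : ℕ} {A : Matrix (Fin n) (Fin n) ℂ} (hA : A.IsHermitian) :
    Matrix (Fin n) (Fin n) ℂ :=
  hA.eigenvectorUnitary.1 * diagonal ((↑) ∘ (√·) ∘ hA.eigenvalues) *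
  (star hA.eigenvectorUnitary : Matrix (Fin n) (Fin n) ℂ)

theorem oldPsdSqrt_isHermitian {n : ℕ} {A : Matrix (Fin n) (Fin n) ℂ} (hA : A.IsHermitian) :
    (oldPsdSqrt hA).IsHermitian := by
  unfold oldPsdSqrt
  rw [star_eq_conjTranspose]
  exact isHermitian_mul_mul_conjTranspose _
    (isHermitian_diagonal_of_self_adjoint _ (by ext i; simp [Function.comp]))

/-- The absolute value `|x| = (x* x)^{1/2}` of a complex matrix. -/
noncomputable def matAbs {n : ℕ} (x : Matrix (Fin n) (Fin n) ℂ) : Matrix (Fin n) (Fin n) ℂ :=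
  oldPsdSqrt (Matrix.posSemidef_conjTranspose_mul_self x).1

/-- The square root `|x|^{1/2}` of the absolute value of a complex matrix. -/
noncomputable def matAbsSqrt {n : ℕ} (x : Matrix (Fin n) (Fin n) ℂ) :
    Matrix (Fin n) (Fin n) ℂ :=
  oldPsdSqrt (oldPsdSqrt_isHermitian (Matrix.posSemidef_conjTranspose_mul_self x).1)

lemma oldPsdSqrt_posSemidef {n : ℕ} {A : Matrix (Fin n) (Fin n) ℂ} (hA : A.IsHermitian) :
    (oldPsdSqrt hA).PosSemidef := by
  unfold oldPsdSqrt
  rw [star_eq_conjTranspose]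
  refine PosSemidef.mul_mul_conjTranspose_same (posSemidef_diagonal_iff.mpr fun i => ?_) _
  simp only [Function.comp]
  exact Complex.zero_le_real.mpr (Real.sqrt_nonneg _)

lemma oldPsdSqrt_mul_self {n : ℕ} {A : Matrix (Fin n) (Fin n) ℂ} (hA : A.PosSemidef) :
    oldPsdSqrt hA.1 * oldPsdSqrt hA.1 = A := by
  unfold oldPsdSqrt
  have hUU : (star hA.1.eigenvectorUnitary : Matrix (Fin n) (Fin n) ℂ) * hA.1.eigenvectorUnitary = 1 :=
    Unitary.coe_star_mul_self _
  have hD : diagonal (((↑) ∘ (√·) ∘ hA.1.eigenvalues) : Fin n → ℂ) *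
      diagonal ((↑) ∘ (√·) ∘ hA.1.eigenvalues) = diagonal (RCLike.ofReal ∘ hA.1.eigenvalues) := by
    rw [diagonal_mul_diagonal]
    congr 1
    funext i
    simp only [Function.comp]
    rw [← Complex.ofReal_mul, Real.mul_self_sqrt (hA.eigenvalues_nonneg i)]
    rfl
  conv_rhs => rw [hA.1.spectral_theorem]
  rw [Unitary.conjStarAlgAut_apply]
  simp only [mul_assoc]
  rw [← mul_assoc (star _ : Matrix (Fin n) (Fin n) ℂ) _ (diagonal _ * _), hUU, one_mul,
    ← mul_assoc (diagonal _) (diagonal _), hD]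

lemma matAbs_posSemidef {n : ℕ} (x : Matrix (Fin n) (Fin n) ℂ) : (matAbs x).PosSemidef :=
  oldPsdSqrt_posSemidef _

lemma matAbsSqrt_posSemidef {n : ℕ} (x : Matrix (Fin n) (Fin n) ℂ) : (matAbsSqrt x).PosSemidef :=
  oldPsdSqrt_posSemidef _

lemma matAbs_mul_self {n : ℕ} (x : Matrix (Fin n) (Fin n) ℂ) :
    matAbs x * matAbs x = xᴴ * x :=
  oldPsdSqrt_mul_self (Matrix.posSemidef_conjTranspose_mul_self x)

lemma matAbsSqrt_mul_self {n : ℕ} (x : Matrix (Fin n) (Fin n) ℂ) :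
    matAbsSqrt x * matAbsSqrt x = matAbs x :=
  oldPsdSqrt_mul_self (oldPsdSqrt_posSemidef (Matrix.posSemidef_conjTranspose_mul_self x).1)

lemma re_trace_CT_nonneg {n : ℕ} (A : Matrix (Fin n) (Fin n) ℂ) :
    0 ≤ ((Aᴴ * A).trace).re := by
  have h : (Aᴴ * A).trace = ∑ i, ∑ j, (starRingEnd ℂ) (A j i) * A j i := by
    simp [Matrix.trace, Matrix.mul_apply, Matrix.diag, Matrix.conjTranspose_apply]
  rw [h, Complex.re_sum]
  refine Finset.sum_nonneg fun i _ => ?_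
  rw [Complex.re_sum]
  refine Finset.sum_nonneg fun j _ => ?_
  rw [Complex.mul_re]
  simp only [Complex.conj_re, Complex.conj_im, neg_mul, sub_neg_eq_add]
  nlinarith [mul_self_nonneg (A j i).re, mul_self_nonneg (A j i).im]

lemma re_trace_mul_nonneg {n : ℕ} {M N : Matrix (Fin n) (Fin n) ℂ}
    (hM : M.PosSemidef) (hN : N.PosSemidef) : 0 ≤ ((M * N).trace).re := by
  set m := oldPsdSqrt hM.1 with hm
  set p := oldPsdSqrt hN.1 with hp
  have hmH : mᴴ = m := oldPsdSqrt_isHermitian hM.1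
  have hpH : pᴴ = p := oldPsdSqrt_isHermitian hN.1
  have key : (M * N).trace = (((p * m)ᴴ) * (p * m)).trace := by
    rw [conjTranspose_mul, hmH, hpH]
    calc (M * N).trace = ((m * m) * (p * p)).trace := by
          rw [oldPsdSqrt_mul_self hM, oldPsdSqrt_mul_self hN]
      _ = (m * ((m * (p * p)) )).trace := by rw [mul_assoc]
      _ = ((m * (p * p)) * m).trace := trace_mul_comm _ _
      _ = ((m * p) * (p * m)).trace := by simp only [mul_assoc]
  rw [key]
  exact re_trace_CT_nonneg _

lemma re_trace_sq_le {n : ℕ} {A P : Matrix (Fin n) (Fin n) ℂ}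
    (hA : A.PosSemidef) (hP : P.PosSemidef) (hPA : (P - A).PosSemidef) :
    ((A * A).trace).re ≤ ((P * P).trace).re := by
  have h1 := re_trace_mul_nonneg hA hPA
  have h2 := re_trace_mul_nonneg hPA hP
  have key : (P * P).trace = (A * A).trace + (A * (P - A)).trace + ((P - A) * P).trace := by
    simp only [Matrix.mul_sub, Matrix.sub_mul, Matrix.trace_sub]
    ring
  have := congrArg Complex.re key
  simp only [Complex.add_re] at this
  linarith

lemma re_trace_UU_le {n : ℕ} (u s : Matrix (Fin n) (Fin n) ℂ)
    (hu : u * uᴴ * u = u) (hs : s.PosSemidef) :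
    ((((u * s) * (u * s)ᴴ) * ((u * s) * (u * s)ᴴ)).trace).re
      ≤ (((s * s) * (s * s)).trace).re := by
  have hsH : sᴴ = s := hs.1
  have hqH : (uᴴ * u)ᴴ = uᴴ * u := by
    rw [conjTranspose_mul, conjTranspose_conjTranspose]
  have hqq : (uᴴ * u) * (uᴴ * u) = uᴴ * u := by
    calc uᴴ * u * (uᴴ * u) = uᴴ * (u * uᴴ * u) := by simp only [mul_assoc]
      _ = uᴴ * u := by rw [hu]
  have hq : (uᴴ * u).PosSemidef := posSemidef_conjTranspose_mul_self u
  have hA : (s * (uᴴ * u) * s).PosSemidef := by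
    have := hq.conjTranspose_mul_mul_same s
    rwa [hsH] at this
  have hP : (s * s).PosSemidef := by
    have := posSemidef_conjTranspose_mul_self s
    rwa [hsH] at this
  have h1q : ((1 : Matrix (Fin n) (Fin n) ℂ) - uᴴ * u).PosSemidef := by
    have he : ((1 : Matrix (Fin n) (Fin n) ℂ) - uᴴ * u)ᴴ * (1 - uᴴ * u) = 1 - uᴴ * u := by
      rw [conjTranspose_sub, conjTranspose_one, hqH, sub_mul, mul_sub, mul_sub, hqq,
        one_mul, mul_one]
      noncomm_ring
    rw [← he]
    exact posSemidef_conjTranspose_mul_self _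
  have hPA : (s * s - s * (uᴴ * u) * s).PosSemidef := by
    have := h1q.conjTranspose_mul_mul_same s
    rw [hsH] at this
    have he : s * (1 - uᴴ * u) * s = s * s - s * (uᴴ * u) * s := by
      rw [mul_sub, mul_one, sub_mul]
    rwa [he] at this
  have hle := re_trace_sq_le hA hP hPA
  have htr : (((u * s) * (u * s)ᴴ) * ((u * s) * (u * s)ᴴ)).trace
      = ((s * (uᴴ * u) * s) * (s * (uᴴ * u) * s)).trace := by
    rw [conjTranspose_mul, hsH]
    calc ((u * s * (s * uᴴ)) * (u * s * (s * uᴴ))).trace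
        = (u * (s * (s * (uᴴ * (u * (s * (s * uᴴ))))))).trace := by simp only [mul_assoc]
      _ = ((s * (s * (uᴴ * (u * (s * (s * uᴴ)))))) * u).trace := trace_mul_comm _ _
      _ = (s * ((s * (uᴴ * (u * (s * (s * (uᴴ * u)))))))).trace := by simp only [mul_assoc]
      _ = (((s * (uᴴ * (u * (s * (s * (uᴴ * u))))))) * s).trace := trace_mul_comm _ _
      _ = ((s * (uᴴ * u) * s) * (s * (uᴴ * u) * s)).trace := by simp only [mul_assoc]
  rw [htr]
  exact hle

theorem disjoint_factorization_estimate {n : ℕ} (a b u v : Matrix (Fin n) (Fin n) ℂ)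
    (hu : u * uᴴ * u = u) (hv : v * vᴴ * v = v)
    (ha : a = u * matAbs a) (hb : b = v * matAbs b)
    (h₁ : aᴴ * b = 0) (h₂ : a * bᴴ = 0) :
    a = (u * matAbsSqrt a) * matAbsSqrt a ∧
      b = (v * matAbsSqrt b) * matAbsSqrt b ∧
      frob ((u * matAbsSqrt a) * (u * matAbsSqrt a)ᴴ + (v * matAbsSqrt b) * (v * matAbsSqrt b)ᴴ) *
          frob ((matAbsSqrt a)ᴴ * matAbsSqrt a + (matAbsSqrt b)ᴴ * matAbsSqrt b) ≤
        frob a ^ 2 + frob b ^ 2 := by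
  have hsH : (matAbsSqrt a)ᴴ = matAbsSqrt a := (matAbsSqrt_posSemidef a).1
  have htH : (matAbsSqrt b)ᴴ = matAbsSqrt b := (matAbsSqrt_posSemidef b).1
  have hPH : (matAbs a)ᴴ = matAbs a := (matAbs_posSemidef a).1
  have hQH : (matAbs b)ᴴ = matAbs b := (matAbs_posSemidef b).1
  have hss := matAbsSqrt_mul_self a
  have htt := matAbsSqrt_mul_self b
  have hPP := matAbs_mul_self a
  have hQQ := matAbs_mul_self b
  refine ⟨by rw [mul_assoc, hss]; exact ha, by rw [mul_assoc, htt]; exact hb, ?_⟩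
  -- abbreviations
  set s := matAbsSqrt a with hs_def
  set t := matAbsSqrt b with ht_def
  set P := matAbs a with hP_def
  set Q := matAbs b with hQ_def
  -- |a| |b| = 0 and |b| |a| = 0
  have hP2Q2 : (aᴴ * a) * (bᴴ * b) = 0 := by
    rw [mul_assoc, ← mul_assoc a bᴴ b, h₂, zero_mul, mul_zero]
  have hPQ2 : P * (bᴴ * b) = 0 := by
    refine (conjTranspose_mul_self_mul_eq_zero P (bᴴ * b)).mp ?_
    rw [hPH, hPP]
    exact hP2Q2
  have hPQ : P * Q = 0 := by
    have h' : P * Qᴴ = 0 := by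
      refine (mul_conjTranspose_mul_self_eq_zero Q P).mp ?_
      rw [hQH, hQQ]
      exact hPQ2
    rwa [hQH] at h'
  have hQP : Q * P = 0 := by
    have := congrArg conjTranspose hPQ
    simpa [conjTranspose_mul, hPH, hQH] using this
  -- aᴴ = P uᴴ
  have haH : aᴴ = P * uᴴ := by
    conv_lhs => rw [ha]
    rw [conjTranspose_mul, hPH]
  have hbH : bᴴ = Q * vᴴ := by
    conv_lhs => rw [hb]
    rw [conjTranspose_mul, hQH]
  -- cross terms vanish as matrices
  have h₁n : P * (uᴴ * (v * Q)) = 0 := by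
    have h := h₁
    rw [haH] at h
    conv_lhs at h => rw [hb]
    simpa only [mul_assoc] using h
  have h₁t : Q * (vᴴ * (u * P)) = 0 := by
    have h : bᴴ * a = 0 := by
      have := congrArg conjTranspose h₁
      simpa [conjTranspose_mul] using this
    rw [hbH] at h
    conv_lhs at h => rw [ha]
    simpa only [mul_assoc] using h
  have hUV : ((u * s) * (u * s)ᴴ) * ((v * t) * (v * t)ᴴ) = 0 := by
    have e : ((u * s) * (u * s)ᴴ) * ((v * t) * (v * t)ᴴ)
        = u * (((s * s) * (uᴴ * (v * (t * t)))) * vᴴ) := by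
      rw [conjTranspose_mul, conjTranspose_mul, hsH, htH]
      simp only [mul_assoc]
    rw [e, hss, htt, h₁n, zero_mul, mul_zero]
  have hVU : ((v * t) * (v * t)ᴴ) * ((u * s) * (u * s)ᴴ) = 0 := by
    have e : ((v * t) * (v * t)ᴴ) * ((u * s) * (u * s)ᴴ)
        = v * (((t * t) * (vᴴ * (u * (s * s)))) * uᴴ) := by
      rw [conjTranspose_mul, conjTranspose_mul, hsH, htH]
      simp only [mul_assoc]
    rw [e, hss, htt, h₁t, zero_mul, mul_zero]
  -- the Y part
  have hYY : (sᴴ * s + tᴴ * t)ᴴ * (sᴴ * s + tᴴ * t) = aᴴ * a + bᴴ * b := by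
    rw [hsH, htH, hss, htt]
    have : (P + Q)ᴴ = P + Q := by rw [conjTranspose_add, hPH, hQH]
    rw [this, add_mul, mul_add, mul_add, hPQ, hQP, hPP, hQQ, add_zero, zero_add]
  -- the X part
  set U : Matrix (Fin n) (Fin n) ℂ := (u * s) * (u * s)ᴴ with hU_def
  set V : Matrix (Fin n) (Fin n) ℂ := (v * t) * (v * t)ᴴ with hV_def
  have hXH : (U + V)ᴴ = U + V := by
    rw [hU_def, hV_def]
    simp [conjTranspose_add, conjTranspose_mul]
  have hXX : (U + V)ᴴ * (U + V) = U * U + V * V := by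
    rw [hXH, add_mul, mul_add, mul_add, hUV, hVU, add_zero, zero_add]
  -- trace bounds
  have hsPSD : s.PosSemidef := matAbsSqrt_posSemidef a
  have htPSD : t.PosSemidef := matAbsSqrt_posSemidef b
  have hUle : ((U * U).trace).re ≤ ((aᴴ * a).trace).re := by
    have h := re_trace_UU_le u s hu hsPSD
    rwa [hss, hPP] at h
  have hVle : ((V * V).trace).re ≤ ((bᴴ * b).trace).re := by
    have h := re_trace_UU_le v t hv htPSD
    rwa [htt, hQQ] at h
  -- numerics
  set α := ((aᴴ * a).trace).re with hα_def
  set β := ((bᴴ * b).trace).re with hβ_def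
  have hα : 0 ≤ α := re_trace_CT_nonneg a
  have hβ : 0 ≤ β := re_trace_CT_nonneg b
  have hfa : frob a ^ 2 = α := Real.sq_sqrt hα
  have hfb : frob b ^ 2 = β := Real.sq_sqrt hβ
  have hfY : frob (sᴴ * s + tᴴ * t) = Real.sqrt (α + β) := by
    rw [frob, hYY, trace_add, Complex.add_re]
  have hfX : frob (U + V) ≤ Real.sqrt (α + β) := by
    rw [frob, hXX, trace_add, Complex.add_re]
    exact Real.sqrt_le_sqrt (by linarith)
  calc frob (U + V) * frob (sᴴ * s + tᴴ * t)
      ≤ Real.sqrt (α + β) * frob (sᴴ * s + tᴴ * t) :=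
        mul_le_mul_of_nonneg_right hfX (by rw [hfY]; exact Real.sqrt_nonneg _)
    _ = Real.sqrt (α + β) * Real.sqrt (α + β) := by rw [hfY]
    _ = α + β := Real.mul_self_sqrt (by linarith)
    _ = frob a ^ 2 + frob b ^ 2 := by rw [hfa, hfb]
end
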